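/- Let 0 ≤ α < 1 and let p, n be positive integers. If f is analytic on the open unit disk D with f(z) = z^p + a_{n+p} z^{n+p} + a_{n+p+1} z^{n+p+1} + ⋯ and Re(1 + z f''(z)/f'(z)) > ((2p−n) + α(2p+n)) / (2(α+1)) for all z ∈ D, then Re(f'(z)/(p z^{p−1})) > (1+α)/2 for all z ∈ D. -/

import Mathlib

open Complex Metric
open Set


lemma slope_nonneg {ψ : ℝ → ℝ} {d : ℝ} (hψ : HasDerivAt ψ d 1)
    (h : ∀ t ∈ Set.Ico (0:ℝ) 1, ψ t ≤ ψ 1) : 0 ≤ d := by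
  have h1 := (hψ.hasDerivWithinAt (s := Set.Iio 1))
  rw [hasDerivWithinAt_iff_tendsto_slope] at h1
  have hsub : Set.Iio (1:ℝ) \ {1} = Set.Iio 1 := by
    ext t; simp (config := {contextual := true}) [lt_iff_le_and_ne]
  rw [hsub] at h1
  refine ge_of_tendsto h1 ?_
  filter_upwards [Ioo_mem_nhdsLT_of_mem (by norm_num : (1:ℝ) ∈ Set.Ioc 0 1)] with t ht
  rw [slope_def_field]
  exact div_nonneg_of_nonpos (by linarith [h t ⟨ht.1.le, ht.2⟩]) (by linarith [ht.2])

lemma hasDerivAt_normSq_comp {Φ : ℝ → ℂ} {D : ℂ} {t0 : ℝ} (h : HasDerivAt Φ D t0) :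
    HasDerivAt (fun t => Complex.normSq (Φ t))
      (2 * ((Φ t0).re * D.re + (Φ t0).im * D.im)) t0 := by
  have hre : HasDerivAt (fun t => (Φ t).re) D.re t0 := by
    simpa [Function.comp_def] using (Complex.reCLM.hasFDerivAt.comp_hasDerivAt t0 h)
  have him : HasDerivAt (fun t => (Φ t).im) D.im t0 := by
    simpa [Function.comp_def] using (Complex.imCLM.hasFDerivAt.comp_hasDerivAt t0 h)
  have h2 := (hre.mul hre).add (him.mul him)
  simp only [Complex.normSq_apply]
  refine h2.congr_deriv ?_
  ring



lemma keyineq (α A : ℝ) (hα0 : 0 ≤ α) (hα1 : α < 1) (n : ℕ) (hn : 1 ≤ n) (hA : (n:ℝ) ≤ A)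
    (u : ℂ) (hu : Complex.normSq u = 1) (hu1 : 1 + u ≠ 0) :
    ((A : ℂ) * u * ((α : ℂ) - 1) / ((1+u)*(1+(α:ℂ)*u))).re
      ≤ -((n:ℝ)*(1-α)/(2*(1+α))) := by
  set x := u.re with hx
  set y := u.im with hy
  have hxy : x^2 + y^2 = 1 := by
    rw [Complex.normSq_apply] at hu; nlinarith [hu]
  have hy2 : y^2 = 1 - x^2 := by linarith
  have hx1 : -1 ≤ x := by nlinarith
  have hxne : x ≠ -1 := by
    intro h
    apply hu1
    have hy0 : y = 0 := by nlinarith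
    have : u = -1 := by
      apply Complex.ext
      · rw [← hx, h]; norm_num
      · rw [← hy, hy0]; norm_num
    rw [this]; ring
  have hx1' : 0 < 1 + x := by rcases lt_or_eq_of_le hx1 with h | h; linarith; exact absurd h.symm hxne
  have hxle : x ≤ 1 := by nlinarith
  have hd1 : Complex.normSq (1+u) = 2 + 2*x := by
    rw [Complex.normSq_apply]; simp [← hx, ← hy]; nlinarith [hxy]
  have hd2 : Complex.normSq (1+(α:ℂ)*u) = 1 + 2*α*x + α^2 := by
    rw [Complex.normSq_apply]; simp [Complex.mul_re, Complex.mul_im, ← hx, ← hy]; nlinarith [hxy]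
  have hnum : ((A : ℂ) * u * ((α : ℂ) - 1)).re * ((1+u)*(1+(α:ℂ)*u)).re
      + ((A : ℂ) * u * ((α : ℂ) - 1)).im * ((1+u)*(1+(α:ℂ)*u)).im
      = A*(α-1)*(1+α)*(1+x) := by
    simp [Complex.mul_re, Complex.mul_im, ← hx, ← hy]
    linear_combination (A*(α-1)*(1+α+α*x)) * hy2
  have hre : ((A : ℂ) * u * ((α : ℂ) - 1) / ((1+u)*(1+(α:ℂ)*u))).re
      = (A*(α-1)*(1+α)*(1+x)) / ((2+2*x) * (1+2*α*x+α^2)) := by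
    rw [Complex.div_re, ← add_div, hnum, Complex.normSq_mul, hd1, hd2]
  rw [hre]
  have h2pos : (0:ℝ) < 1+2*α*x+α^2 := by nlinarith [mul_pos (sub_pos.2 hα1) (sub_pos.2 hα1), mul_nonneg hα0 hx1'.le]
  have hdenpos : 0 < (2+2*x) * (1+2*α*x+α^2) := mul_pos (by linarith) h2pos
  have hαpos : 0 < 2*(1+α) := by linarith
  have hneg : -((n:ℝ)*(1-α)/(2*(1+α))) = (-((n:ℝ)*(1-α)))/(2*(1+α)) := by ring
  rw [hneg, div_le_div_iff₀ hdenpos hαpos]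
  nlinarith [mul_nonneg (mul_nonneg hx1'.le (sub_nonneg.2 hα1.le)) (mul_nonneg (sub_nonneg.2 hA) (sq_nonneg (1+α))),
    mul_nonneg (mul_nonneg hx1'.le (sub_nonneg.2 hα1.le)) (mul_nonneg (mul_nonneg hα0 (sub_nonneg.2 hxle)) (Nat.cast_nonneg n)),
    mul_nonneg (mul_nonneg (mul_nonneg hx1'.le (sub_nonneg.2 hα1.le)) (mul_nonneg (mul_nonneg hα0 (sub_nonneg.2 hxle)) (Nat.cast_nonneg n))) (sub_nonneg.2 hxle)]


lemma mobius (α : ℝ) (hα1 : α < 1) (g : ℂ) (hgα : g - (α:ℂ) ≠ 0) :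
    (1 + (1-g)/(g-(α:ℂ)) ≠ 0) ∧ (g = (1 + (α:ℂ)*((1-g)/(g-(α:ℂ)))) / (1 + (1-g)/(g-(α:ℂ)))) := by
  have hα1c : (1:ℂ) - (α:ℂ) ≠ 0 := by
    intro h
    rw [sub_eq_zero] at h
    have := congrArg Complex.re h
    simp at this
    linarith
  have h1 : 1 + (1-g)/(g-(α:ℂ)) = (1-(α:ℂ))/(g-(α:ℂ)) := by field_simp; ring
  have h1ne : 1 + (1-g)/(g-(α:ℂ)) ≠ 0 := by rw [h1]; exact div_ne_zero hα1c hgα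
  refine ⟨h1ne, ?_⟩
  rw [eq_div_iff h1ne, h1]
  field_simp
  ring

lemma final_calc (α A : ℝ) (z0 W W' : ℂ) (h1w0 : 1 + W ≠ 0) (h1aw0 : 1 + (α:ℂ)*W ≠ 0)
    (hX : z0 * W' = ((A:ℝ):ℂ)*W) :
    z0 * (((α:ℂ) * W' * (1 + W) - (1 + (α:ℂ) * W) * W')/((1 + W)^2)) / ((1 + (α:ℂ)*W)/(1+W))
      = ((A:ℝ):ℂ) * W * ((α:ℂ)-1)/((1+W)*(1+(α:ℂ)*W)) := by
  field_simp
  linear_combination ((α:ℂ) - 1) * hX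

set_option maxHeartbeats 2000000 in
lemma core (α : ℝ) (hα0 : 0 ≤ α) (hα1 : α < 1) (n : ℕ) (hn : 1 ≤ n)
    (G v : ℂ → ℂ) (hG : DifferentiableOn ℂ G (ball 0 1))
    (hv : DifferentiableOn ℂ v (ball 0 1))
    (hGform : ∀ z ∈ ball (0:ℂ) 1, G z = 1 + z^n * v z)
    (hGne : ∀ z ∈ ball (0:ℂ) 1, G z ≠ 0)
    (hre : ∀ z ∈ ball (0:ℂ) 1, z ≠ 0 → -((n:ℝ)*(1-α)/(2*(1+α))) < (z * deriv G z / G z).re) :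
    ∀ z ∈ ball (0:ℂ) 1, ((1+α)/2 : ℝ) < (G z).re := by
  set c : ℝ := (1+α)/2 with hc_def
  have hc1 : c < 1 := by rw [hc_def]; linarith
  have hαc : α < c := by rw [hc_def]; linarith
  by_contra hcon
  push_neg at hcon
  obtain ⟨z1, hz1b, hz1le⟩ := hcon
  have hz1n : ‖z1‖ < 1 := mem_ball_zero_iff.1 hz1b
  have hG0 : G 0 = 1 := by
    have := hGform 0 (mem_ball_self one_pos)
    simpa [zero_pow (by omega : n ≠ 0)] using this
  -- compact set K
  have hsub1 : closedBall (0:ℂ) ‖z1‖ ⊆ ball 0 1 := closedBall_subset_ball hz1n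
  have hcontG : ContinuousOn (fun z => (G z).re) (closedBall (0:ℂ) ‖z1‖) :=
    (Complex.continuous_re.comp_continuousOn (hG.continuousOn)).mono hsub1
  set K : Set ℂ := closedBall (0:ℂ) ‖z1‖ ∩ (fun z => (G z).re) ⁻¹' (Iic c) with hK_def
  have hKclosed : IsClosed K :=
    hcontG.preimage_isClosed_of_isClosed isClosed_closedBall isClosed_Iic
  have hKcp : IsCompact K :=
    (isCompact_closedBall (0:ℂ) ‖z1‖).of_isClosed_subset hKclosed inter_subset_left
  have hKne : K.Nonempty := ⟨z1, mem_closedBall_zero_iff.2 le_rfl, hz1le⟩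
  obtain ⟨z0, hz0K, hz0min⟩ := hKcp.exists_isMinOn hKne (continuous_norm.continuousOn)
  rw [isMinOn_iff] at hz0min
  have hz0n1 : ‖z0‖ ≤ ‖z1‖ := mem_closedBall_zero_iff.1 hz0K.1
  have hz0b : z0 ∈ ball (0:ℂ) 1 := mem_ball_zero_iff.2 (lt_of_le_of_lt hz0n1 hz1n)
  have hz0le : (G z0).re ≤ c := hz0K.2
  have hz0ne : z0 ≠ 0 := by
    intro h
    rw [h, hG0] at hz0le
    simp at hz0le
    linarith
  set r : ℝ := ‖z0‖ with hr_def
  have hr0 : 0 < r := norm_pos_iff.2 hz0ne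
  have hr1 : r < 1 := lt_of_le_of_lt hz0n1 hz1n
  -- interior strict inequality
  have hint : ∀ z : ℂ, ‖z‖ < r → c < (G z).re := by
    intro z hzr
    by_contra hle
    push_neg at hle
    have hzK : z ∈ K := ⟨mem_closedBall_zero_iff.2 (le_trans hzr.le hz0n1), hle⟩
    exact absurd (hz0min z hzK) (not_le.2 hzr)
  -- boundary weak inequality
  have hbd : ∀ z : ℂ, ‖z‖ ≤ r → c ≤ (G z).re := by
    intro z hzr
    rcases lt_or_eq_of_le hzr with h | h
    · exact (hint z h).le
    · have hzb : z ∈ ball (0:ℂ) 1 := mem_ball_zero_iff.2 (by rw [h]; exact hr1)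
      have hctsz : ContinuousAt G z :=
        (hG.differentiableAt (isOpen_ball.mem_nhds hzb)).continuousAt
      have h1 : ContinuousAt (fun t : ℝ => (G ((t:ℂ) * z)).re) 1 := by
        apply Complex.continuous_re.continuousAt.comp
        apply ContinuousAt.comp
        · simpa using hctsz
        · exact (Complex.continuous_ofReal.mul continuous_const).continuousAt
      have hT : Filter.Tendsto (fun t : ℝ => (G ((t:ℂ) * z)).re) (nhdsWithin 1 (Iio 1)) (nhds ((G (((1:ℝ):ℂ) * z)).re)) :=
        h1.continuousWithinAt
      norm_num at hT
      refine ge_of_tendsto hT ?_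
      filter_upwards [Ioo_mem_nhdsLT_of_mem (by norm_num : (1:ℝ) ∈ Ioc 0 1)] with t ht
      apply (hint _ _).le
      rw [norm_mul, Complex.norm_real, Real.norm_eq_abs, abs_of_pos ht.1, ← h]
      calc t * ‖z‖ < 1 * ‖z‖ := by
            apply mul_lt_mul_of_pos_right ht.2
            rw [h]; exact hr0
        _ = ‖z‖ := one_mul _
  have hz0eq : (G z0).re = c := le_antisymm hz0le (hbd z0 le_rfl)
  -- the region U
  set U : Set ℂ := ball (0:ℂ) 1 ∩ G ⁻¹' ({(α:ℂ)}ᶜ) with hU_def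
  have hUopen : IsOpen U :=
    hG.continuousOn.isOpen_inter_preimage isOpen_ball isOpen_compl_singleton
  have hUsub : U ⊆ ball (0:ℂ) 1 := inter_subset_left
  have hUball : closedBall (0:ℂ) r ⊆ U := by
    intro z hzr
    rw [mem_closedBall_zero_iff] at hzr
    refine ⟨mem_ball_zero_iff.2 (lt_of_le_of_lt hzr hr1), ?_⟩
    intro hGα
    simp only [Set.mem_preimage, Set.mem_singleton_iff] at hGα
    have := hbd z hzr
    rw [hGα] at this
    simp at this
    linarith
  have hz0U : z0 ∈ U := hUball (mem_closedBall_zero_iff.2 le_rfl)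
  have hGαne : ∀ z ∈ U, G z - (α:ℂ) ≠ 0 := by
    intro z hz hc0
    exact hz.2 (by simpa [Set.mem_preimage, sub_eq_zero] using hc0)
  -- the functions w and m
  set w : ℂ → ℂ := fun z => (1 - G z)/(G z - (α:ℂ)) with hw_def
  set m : ℂ → ℂ := fun z => -(v z)/(G z - (α:ℂ)) with hm_def
  have hwdiff : DifferentiableOn ℂ w U :=
    ((differentiableOn_const 1).sub (hG.mono hUsub)).div
      ((hG.mono hUsub).sub (differentiableOn_const _)) hGαne
  have hmdiff : DifferentiableOn ℂ m U :=
    ((hv.mono hUsub).neg).div ((hG.mono hUsub).sub (differentiableOn_const _)) hGαne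
  have hwm : ∀ z ∈ U, w z = z^n * m z := by
    intro z hz
    rw [hw_def, hm_def]
    simp only []
    rw [hGform z (hUsub hz), ← mul_div_assoc]
    congr 1
    ring
  -- |w| ≤ 1 where Re G ≥ c
  have hwle : ∀ z : ℂ, G z - (α:ℂ) ≠ 0 → c ≤ (G z).re → ‖w z‖ ≤ 1 := by
    intro z hne hge
    rw [hw_def]
    simp only []
    rw [norm_div, div_le_one (norm_pos_iff.2 hne)]
    have h1 : Complex.normSq (1 - G z) ≤ Complex.normSq (G z - (α:ℂ)) := by
      simp only [Complex.normSq_apply, Complex.sub_re, Complex.sub_im, Complex.one_re,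
        Complex.one_im, Complex.ofReal_re, Complex.ofReal_im]
      nlinarith [hge, hαc, hc_def]
    have := Real.sqrt_le_sqrt h1
    rwa [← Complex.norm_def, ← Complex.norm_def] at this
  -- max modulus for m
  have hm_bound : ∀ z ∈ closedBall (0:ℂ) r, ‖m z‖ ≤ 1/r^n := by
    have hcl : closure (ball (0:ℂ) r) = closedBall (0:ℂ) r := closure_ball 0 hr0.ne'
    intro z hz
    apply Complex.norm_le_of_forall_mem_frontier_norm_le (isBounded_ball (x := (0:ℂ)) (r := r))
    · apply DifferentiableOn.diffContOnCl
      rw [hcl]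
      exact hmdiff.mono hUball
    · intro x hx
      rw [frontier_ball 0 hr0.ne'] at hx
      have hxr : ‖x‖ = r := by simpa [mem_sphere_iff_norm] using hx
      have hxU : x ∈ U := hUball (mem_closedBall_zero_iff.2 hxr.le)
      have hwx : ‖w x‖ ≤ 1 := hwle x (hGαne x hxU) (hbd x hxr.le)
      have : ‖w x‖ = r^n * ‖m x‖ := by rw [hwm x hxU, norm_mul, norm_pow, hxr]
      rw [this] at hwx
      rw [le_div_iff₀ (by positivity)]
      linarith
    · rw [hcl]; exact hz
  -- Schwarz bound for w
  have hwz : ∀ z ∈ closedBall (0:ℂ) r, ‖w z‖ ≤ ‖z‖^n / r^n := by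
    intro z hz
    rw [hwm z (hUball hz), norm_mul, norm_pow, div_eq_mul_inv, ← one_div]
    exact mul_le_mul_of_nonneg_left (hm_bound z hz) (by positivity)
  -- |w z0| = 1
  have hwz0 : Complex.normSq (w z0) = 1 := by
    rw [hw_def]
    simp only []
    rw [Complex.normSq_div]
    have h2 : Complex.normSq (1 - G z0) = Complex.normSq (G z0 - (α:ℂ)) := by
      simp only [Complex.normSq_apply, Complex.sub_re, Complex.sub_im, Complex.one_re,
        Complex.one_im, Complex.ofReal_re, Complex.ofReal_im]
      have : (G z0).re = (1+α)/2 := hz0eq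
      nlinarith [this]
    rw [h2, div_self (Complex.normSq_pos.2 (hGαne z0 hz0U)).ne']

  -- derivative of w at z0
  have hwA : DifferentiableAt ℂ w z0 := hwdiff.differentiableAt (hUopen.mem_nhds hz0U)
  have hwd : HasDerivAt w (deriv w z0) z0 := hwA.hasDerivAt
  set W : ℂ := w z0 with hW_def
  set W' : ℂ := deriv w z0 with hW'_def
  set X : ℂ := z0 * W' with hX_def
  -- radial derivative
  have hpath : HasDerivAt (fun t : ℝ => (t:ℂ) * z0) z0 1 := by
    simpa using (Complex.ofRealCLM.hasDerivAt (x := (1:ℝ))).mul_const z0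
  have hΦ : HasDerivAt (fun t : ℝ => w ((t:ℂ) * z0)) X 1 := by
    have := hwd.scomp_of_eq (x := (1:ℝ)) hpath (by norm_num)
    simpa [hX_def, smul_eq_mul, Function.comp_def] using this
  have hΨ : HasDerivAt (fun t : ℝ => Complex.normSq (w ((t:ℂ) * z0)) - t^(2*n))
      (2 * (W.re * X.re + W.im * X.im) - 2*n) 1 := by
    have h1 := (hasDerivAt_normSq_comp hΦ).sub (hasDerivAt_pow (2*n) (1:ℝ))
    have e : w (((1:ℝ):ℂ) * z0) = W := by norm_num [hW_def]
    rw [e] at h1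
    refine h1.congr_deriv ?_
    push_cast
    simp
  have hAre : (n:ℝ) ≤ W.re * X.re + W.im * X.im := by
    have hψle : ∀ t ∈ Set.Ico (0:ℝ) 1,
        Complex.normSq (w ((t:ℂ) * z0)) - t^(2*n)
          ≤ Complex.normSq (w (((1:ℝ):ℂ) * z0)) - (1:ℝ)^(2*n) := by
      intro t ht
      have e1 : Complex.normSq (w (((1:ℝ):ℂ) * z0)) = 1 := by norm_num; exact hwz0
      rw [e1]
      have htz : ‖(t:ℂ) * z0‖ = t * r := by
        rw [norm_mul, Complex.norm_real, Real.norm_eq_abs, _root_.abs_of_nonneg ht.1, hr_def]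
      have hmem : (t:ℂ) * z0 ∈ closedBall (0:ℂ) r := by
        rw [mem_closedBall_zero_iff, htz]
        nlinarith [ht.1, ht.2.le, hr0]
      have hb1 : ‖w ((t:ℂ) * z0)‖ ≤ t^n := by
        have := hwz _ hmem
        rw [htz] at this
        calc ‖w ((t:ℂ) * z0)‖ ≤ (t*r)^n / r^n := this
          _ = t^n := by rw [mul_pow]; field_simp
      have : Complex.normSq (w ((t:ℂ) * z0)) ≤ (t^n)^2 := by
        rw [Complex.normSq_eq_norm_sq]
        exact pow_le_pow_left₀ (norm_nonneg _) hb1 2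
      have e2 : (t^n)^2 = t^(2*n) := by rw [← pow_mul, mul_comm]
      rw [one_pow]
      nlinarith [this, e2]
    have := slope_nonneg hΨ (by
      intro t ht
      have := hψle t ht
      push_cast at this ⊢
      linarith)
    linarith
  -- angular derivative
  have hexp : HasDerivAt (fun θ : ℝ => Complex.exp ((θ:ℂ) * Complex.I) * z0)
      (Complex.I * z0) 0 := by
    have hin : HasDerivAt (fun θ : ℝ => (θ:ℂ) * Complex.I) Complex.I 0 := by
      simpa using (Complex.ofRealCLM.hasDerivAt (x := (0:ℝ))).mul_const Complex.I
    have hout := (Complex.hasDerivAt_exp (((0:ℝ):ℂ) * Complex.I)).scomp_of_eq (x := (0:ℝ)) hin rfl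
    have := hout.mul_const z0
    simpa [smul_eq_mul] using this
  have hΘ : HasDerivAt (fun θ : ℝ => w (Complex.exp ((θ:ℂ) * Complex.I) * z0))
      (Complex.I * X) 0 := by
    have := hwd.scomp_of_eq (x := (0:ℝ)) hexp (by norm_num)
    simpa [hX_def, smul_eq_mul, Function.comp_def, mul_assoc] using this
  have hχmax : IsLocalMax (fun θ : ℝ => Complex.normSq (w (Complex.exp ((θ:ℂ) * Complex.I) * z0))) 0 := by
    apply Filter.Eventually.of_forall
    intro θ
    have e0 : Complex.exp (((0:ℝ):ℂ) * Complex.I) * z0 = z0 := by norm_num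
    have hnorm : ‖Complex.exp ((θ:ℂ) * Complex.I) * z0‖ = r := by
      rw [norm_mul, Complex.norm_exp]
      simp [hr_def]
    have hmem : Complex.exp ((θ:ℂ) * Complex.I) * z0 ∈ closedBall (0:ℂ) r :=
      mem_closedBall_zero_iff.2 hnorm.le
    have hb1 : ‖w (Complex.exp ((θ:ℂ) * Complex.I) * z0)‖ ≤ 1 := by
      have := hwz _ hmem
      rw [hnorm] at this
      calc ‖w _‖ ≤ r^n / r^n := this
        _ = 1 := by field_simp
    have : Complex.normSq (w (Complex.exp ((θ:ℂ) * Complex.I) * z0)) ≤ 1 := by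
      rw [Complex.normSq_eq_norm_sq]
      nlinarith [norm_nonneg (w (Complex.exp ((θ:ℂ) * Complex.I) * z0))]
    show Complex.normSq (w (Complex.exp ((θ:ℂ) * Complex.I) * z0))
      ≤ Complex.normSq (w (Complex.exp (((0:ℝ):ℂ) * Complex.I) * z0))
    rw [e0, ← hW_def, hwz0]
    exact this
  have hχd : HasDerivAt (fun θ : ℝ => Complex.normSq (w (Complex.exp ((θ:ℂ) * Complex.I) * z0)))
      (2 * (W.re * (Complex.I * X).re + W.im * (Complex.I * X).im)) 0 := by
    have h1 := hasDerivAt_normSq_comp hΘ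
    have e0 : Complex.exp (((0:ℝ):ℂ) * Complex.I) * z0 = z0 := by norm_num
    rw [e0, ← hW_def] at h1
    exact h1
  have hang : W.re * (Complex.I * X).re + W.im * (Complex.I * X).im = 0 := by
    have := hχmax.hasDerivAt_eq_zero hχd
    linarith
  -- A is real and ≥ n
  set A : ℂ := (starRingEnd ℂ) W * X with hA_def
  have hA_re : A.re = W.re * X.re + W.im * X.im := by
    simp [hA_def, Complex.mul_re]
  have hA_im : A.im = 0 := by
    simp only [hA_def, Complex.mul_im, Complex.conj_re, Complex.conj_im]
    have h1 : (Complex.I * X).re = -X.im := by simp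
    have h2 : (Complex.I * X).im = X.re := by simp
    rw [h1, h2] at hang
    linarith
  have hA_eq : A = ((A.re : ℝ) : ℂ) := Complex.ext rfl (by simp [hA_im])
  have hAn : (n:ℝ) ≤ A.re := by rw [hA_re]; exact hAre
  have hXAW : X = ((A.re : ℝ) : ℂ) * W := by
    have h1 : A * W = X * ((starRingEnd ℂ) W * W) := by rw [hA_def]; ring
    have h2 : (starRingEnd ℂ) W * W = (Complex.normSq W : ℂ) := by
      rw [mul_comm, Complex.mul_conj]
    rw [h2, hwz0] at h1
    simp at h1
    rw [← hA_eq, h1]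
  -- formulas for G in terms of w on U
  have hww : ∀ z : ℂ, w z = (1 - G z)/(G z - (α:ℂ)) := fun z => rfl
  have h1wne : ∀ z ∈ U, 1 + w z ≠ 0 := by
    intro z hz
    rw [hww z]
    exact (mobius α hα1 (G z) (hGαne z hz)).1
  have hGU : ∀ z ∈ U, G z = (1 + (α:ℂ) * w z)/(1 + w z) := by
    intro z hz
    have h2 := (mobius α hα1 (G z) (hGαne z hz)).2
    rw [← hww z] at h2
    exact h2
  have h1w0 : 1 + W ≠ 0 := by rw [hW_def]; exact h1wne z0 hz0U
  have hGz0f : G z0 = (1 + (α:ℂ) * W)/(1 + W) := by rw [hW_def]; exact hGU z0 hz0U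
  have h1aw0 : 1 + (α:ℂ) * W ≠ 0 := by
    intro h
    apply hGne z0 hz0b
    rw [hGz0f, h, zero_div]
  -- derivative of G at z0
  have hGev : G =ᶠ[nhds z0] fun z => (1 + (α:ℂ) * w z)/(1 + w z) :=
    Filter.eventuallyEq_of_mem (hUopen.mem_nhds hz0U) hGU
  have hderivG : deriv G z0 = ((α:ℂ) * W' * (1 + W) - (1 + (α:ℂ) * W) * W')/((1 + W)^2) := by
    rw [hGev.deriv_eq]
    have hd : HasDerivAt (fun z => (1 + (α:ℂ) * w z)/(1 + w z))
        ((((α:ℂ) * W') * (1 + W) - (1 + (α:ℂ) * W) * W')/((1 + W)^2)) z0 := by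
      have hnum : HasDerivAt (fun z => 1 + (α:ℂ) * w z) ((α:ℂ) * W') z0 := by
        simpa using (hwd.const_mul (α:ℂ))
      have hden : HasDerivAt (fun z => 1 + w z) W' z0 := by
        simpa using hwd
      simpa [hW_def, Pi.div_def] using hnum.div hden h1w0
    exact hd.deriv
  -- final computation
  have hfinal : z0 * deriv G z0 / G z0
      = ((A.re : ℝ) : ℂ) * W * ((α:ℂ) - 1) / ((1 + W) * (1 + (α:ℂ) * W)) := by
    rw [hderivG, hGz0f]
    exact final_calc α A.re z0 W W' h1w0 h1aw0 hXAW
  have hlt := hre z0 hz0b hz0ne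
  rw [hfinal] at hlt
  have hkey := keyineq α A.re hα0 hα1 n hn hAn W hwz0 h1w0
  linarith


lemma hmz : ∀ (m : ℕ) (z : ℂ), (m:ℂ) * z^(m-1) * z = m * z^m := by
  intro m z
  cases m with
  | zero => simp
  | succ k => simp [pow_succ]; ring

lemma key_eq (p : ℕ) (hp : 1 ≤ p) (z g g' : ℂ) (hz : z ≠ 0) (hg : g ≠ 0) :
    1 + z * (((p:ℂ) * (((p-1:ℕ):ℂ) * z^(p-1-1))) * g + ((p:ℂ) * z^(p-1)) * g') / ((p:ℂ) * z^(p-1) * g)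
      = (p:ℂ) + z * g' / g := by
  have hpne : (p:ℂ) ≠ 0 := Nat.cast_ne_zero.2 (by omega)
  have hzp : z^(p-1) ≠ 0 := pow_ne_zero _ hz
  have e3 : ((p-1:ℕ):ℂ) * z^(p-1-1) * z = ((p-1:ℕ):ℂ) * z^(p-1) := hmz (p-1) z
  push_cast [Nat.cast_sub hp] at e3
  field_simp
  push_cast [Nat.cast_sub hp]
  linear_combination g * e3


theorem stmt_0 (α : ℝ) (hα0 : 0 ≤ α) (hα1 : α < 1) (p n : ℕ) (hp : 1 ≤ p) (hn : 1 ≤ n)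
    (f a : ℂ → ℂ) (hf : DifferentiableOn ℂ f (ball 0 1))
    (ha : DifferentiableOn ℂ a (ball 0 1))
    (hform : ∀ z ∈ ball (0:ℂ) 1, f z = z ^ p + z ^ (n + p) * a z)
    (hderiv : ∀ z ∈ ball (0:ℂ) 1, z ≠ 0 → deriv f z ≠ 0)
    (hre : ∀ z ∈ ball (0:ℂ) 1, z ≠ 0 →
      ((2 * p - n : ℝ) + α * (2 * p + n)) / (2 * (α + 1)) <
        (1 + z * deriv (deriv f) z / deriv f z).re) :
    ∀ z ∈ ball (0:ℂ) 1, z ≠ 0 →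
      ((1 + α) / 2 : ℝ) < (deriv f z / (p * z ^ ((p : ℤ) - 1))).re := by
  have hpne : (p:ℂ) ≠ 0 := Nat.cast_ne_zero.2 (by omega)
  have haA : AnalyticOnNhd ℂ a (ball 0 1) := ha.analyticOnNhd isOpen_ball
  have ha' : DifferentiableOn ℂ (deriv a) (ball 0 1) := haA.deriv.differentiableOn
  set v : ℂ → ℂ := fun z => (((n:ℂ)+p) * a z + z * deriv a z) / p with hv_def
  set G : ℂ → ℂ := fun z => 1 + z^n * v z with hG_def
  have hvdiff : DifferentiableOn ℂ v (ball 0 1) := by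
    apply DifferentiableOn.div_const
    exact ((ha.const_mul _).add ((differentiable_id.differentiableOn).mul ha'))
  have hGdiff : DifferentiableOn ℂ G (ball 0 1) := by
    apply DifferentiableOn.const_add
    exact ((differentiable_pow n).differentiableOn).mul hvdiff
  -- derivative of f
  have hfe : ∀ z ∈ ball (0:ℂ) 1, deriv f z = (p:ℂ) * z^(p-1) * G z := by
    intro z hz
    have hev : f =ᶠ[nhds z] fun w => w^p + w^(n+p) * a w :=
      Filter.eventuallyEq_of_mem (isOpen_ball.mem_nhds hz) hform
    rw [hev.deriv_eq]
    have hda : HasDerivAt a (deriv a z) z :=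
      (ha.differentiableAt (isOpen_ball.mem_nhds hz)).hasDerivAt
    have hd : HasDerivAt (fun w => w^p + w^(n+p) * a w)
        ((p:ℂ) * z^(p-1) + (((n+p : ℕ):ℂ) * z^(n+p-1) * a z + z^(n+p) * deriv a z)) z := by
      exact (hasDerivAt_pow p z).add (((hasDerivAt_pow (n+p) z).mul hda))
    rw [hd.deriv]
    have e1 : n + p - 1 = (p-1) + n := by omega
    have e2 : n + p = (p-1) + n + 1 := by omega
    rw [hG_def, hv_def]
    simp only []
    rw [e1, e2, pow_add, pow_add, pow_succ]
    push_cast [Nat.cast_sub hp]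
    field_simp
    ring
  have hGne : ∀ z ∈ ball (0:ℂ) 1, G z ≠ 0 := by
    intro z hz
    by_cases hz0 : z = 0
    · subst hz0; simp [hG_def, zero_pow (by omega : n ≠ 0)]
    · intro hG0
      exact hderiv z hz hz0 (by rw [hfe z hz, hG0, mul_zero])
  -- hypothesis transfer
  have hre' : ∀ z ∈ ball (0:ℂ) 1, z ≠ 0 →
      -((n:ℝ)*(1-α)/(2*(1+α))) < (z * deriv G z / G z).re := by
    intro z hz hz0
    have hGz' : HasDerivAt G (deriv G z) z :=
      (hGdiff.differentiableAt (isOpen_ball.mem_nhds hz)).hasDerivAt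
    have hev2 : deriv f =ᶠ[nhds z] fun w => (p:ℂ) * w^(p-1) * G w :=
      Filter.eventuallyEq_of_mem (isOpen_ball.mem_nhds hz) hfe
    have hd2 : HasDerivAt (fun w => (p:ℂ) * w^(p-1) * G w)
        (((p:ℂ) * (((p-1:ℕ):ℂ) * z^(p-1-1))) * G z + ((p:ℂ) * z^(p-1)) * deriv G z) z :=
      (((hasDerivAt_pow (p-1) z).const_mul (p:ℂ))).mul hGz'
    have hf'' : deriv (deriv f) z = ((p:ℂ) * (((p-1:ℕ):ℂ) * z^(p-1-1))) * G z
        + ((p:ℂ) * z^(p-1)) * deriv G z := by rw [hev2.deriv_eq, hd2.deriv]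
    have hzp : z^(p-1) ≠ 0 := pow_ne_zero _ hz0
    have hGz : G z ≠ 0 := hGne z hz
    have key : 1 + z * deriv (deriv f) z / deriv f z = (p:ℂ) + z * deriv G z / G z := by
      rw [hf'', hfe z hz]
      exact key_eq p hp z (G z) (deriv G z) hz0 hGz
    have hκ : ((2 * p - n : ℝ) + α * (2 * p + n)) / (2 * (α + 1))
        = p - ((n:ℝ)*(1-α)/(2*(1+α))) := by
      field_simp
      ring
    have h1 := hre z hz hz0
    rw [hκ, key] at h1
    have : ((p:ℂ) + z * deriv G z / G z).re = p + (z * deriv G z / G z).re := by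
      simp [Complex.add_re]
    rw [this] at h1
    linarith
  have hcore := core α hα0 hα1 n hn G v hGdiff hvdiff (fun z _ => rfl) hGne hre'
  intro z hz hz0
  have hzp : z^(p-1) ≠ 0 := pow_ne_zero _ hz0
  have e4 : ((p:ℤ) - 1) = ((p - 1 : ℕ) : ℤ) := by omega
  have : deriv f z / ((p:ℂ) * z ^ ((p:ℤ) - 1)) = G z := by
    rw [e4, zpow_natCast, hfe z hz, div_eq_iff (mul_ne_zero hpne hzp)]
    ring
  rw [this]
  exact hcore z hz
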